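/- Let $E,A\in\mathbb{C}^{n\times n}$, $B\in\mathbb{C}^{n\times m}$, distinct $z_1,\dots,z_S$ with each $z_jE-A$ invertible, weights $q_j$, $G(z_j)=(z_jE-A)^{-1}B$, and $Q(z)=\sum_j q_j/(z-z_j)$. If $\sum_{j=1}^S q_jE\,G(z_j)=0$, then the barycentric surrogate $\widetilde{G}(z)=\sum_j\frac{q_jG(z_j)}{z-z_j}/Q(z)$ reproduces $G$ exactly: $\widetilde{G}(z)=(zE-A)^{-1}B$ for every $z$ with $zE-A$ invertible, $z\notin\{z_j\}$, and $Q(z)\neq 0$. -/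
import Mathlib


/-- If the residual vector `∑ j, q j • (E * G(z j))` vanishes, the
barycentric state surrogate reproduces `G` exactly wherever both are defined. -/
theorem surrogate_exact_when_residual_vector_vanishes
    {n m S : ℕ}
    (E A : Matrix (Fin n) (Fin n) ℂ) (B : Matrix (Fin n) (Fin m) ℂ)
    (z : Fin S → ℂ) (hz : Function.Injective z)
    (hinv : ∀ j, IsUnit (z j • E - A))
    (q : Fin S → ℂ)
    (G : Fin S → Matrix (Fin n) (Fin m) ℂ)
    (hG : ∀ j, G j = (z j • E - A)⁻¹ * B)
    (Q : ℂ → ℂ) (hQ : ∀ w, Q w = ∑ j, q j / (w - z j))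
    (Gt : ℂ → Matrix (Fin n) (Fin m) ℂ)
    (hGt : ∀ w, Gt w = (Q w)⁻¹ • ∑ j, (q j / (w - z j)) • G j)
    (hres : (∑ j, q j • (E * G j)) = 0) :
    ∀ w : ℂ, IsUnit (w • E - A) → w ∉ Set.range z → Q w ≠ 0 →
      Gt w = (w • E - A)⁻¹ * B := by
  intro w hw hnr hQw
  have hne : ∀ j, w - z j ≠ 0 := by
    intro j h
    exact hnr ⟨j, (sub_eq_zero.mp h).symm⟩
  have hwd : IsUnit (w • E - A).det := (Matrix.isUnit_iff_isUnit_det _).mp hw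
  have key : (w • E - A) * (∑ j, (q j / (w - z j)) • G j) = Q w • B := by
    rw [Matrix.mul_sum]
    have step : ∀ j ∈ Finset.univ, (w • E - A) * ((q j / (w - z j)) • G j)
        = (q j / (w - z j)) • B + q j • (E * G j) := by
      intro j _
      have h1 : (z j • E - A) * G j = B := by
        rw [hG j, ← Matrix.mul_assoc,
          Matrix.mul_nonsing_inv _ ((Matrix.isUnit_iff_isUnit_det _).mp (hinv j)),
          Matrix.one_mul]
      have h2 : (w • E - A) = (z j • E - A) + (w - z j) • E := by
        rw [sub_smul]; abel
      rw [Matrix.mul_smul, h2, Matrix.add_mul, h1, Matrix.smul_mul, smul_add, smul_smul,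
        div_mul_cancel₀ _ (hne j)]
    rw [Finset.sum_congr rfl step, Finset.sum_add_distrib, hres, add_zero,
      ← Finset.sum_smul, ← hQ]
  have hGtw : (w • E - A) * Gt w = B := by
    rw [hGt, Matrix.mul_smul, key, smul_smul, inv_mul_cancel₀ hQw, one_smul]
  calc Gt w = (w • E - A)⁻¹ * ((w • E - A) * Gt w) := by
        rw [← Matrix.mul_assoc, Matrix.nonsing_inv_mul _ hwd, Matrix.one_mul]
    _ = (w • E - A)⁻¹ * B := by rw [hGtw]
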